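/- arXiv:1710.02910 — 3 statements merged into one kernel-verified Lean document; each statement's English description precedes it below -/
import Mathlib

section
/- With the weight function l(t,x) = λ(x² + t²(t−T)²) and the coefficient functions B, G, D, Φ₁, Φ defined from l as in the context, the following identities hold for all (t,x) ∈ ℝ²: (i) B − (G − Φ₁)ₓ = −32 λ³ x³, and (ii) 3 ( B − (G − Φ₁)ₓ )ₓ + (Φ₁)ₓₓ + 2Φ + 2 (G − Φ₁) Φ₁ − 2 (G − Φ₁)ₓ D − ( (G − Φ₁) D )ₓ = 352 λ³ x². -/
/-- Partial derivative in the time variable (first argument). -/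
noncomputable def pt (y : ℝ → ℝ → ℝ) : ℝ → ℝ → ℝ := fun t x => deriv (fun s => y s x) t

/-- Partial derivative in the space variable (second argument). -/
noncomputable def px (y : ℝ → ℝ → ℝ) : ℝ → ℝ → ℝ := fun t x => deriv (fun z => y t z) x

/-- The Carleman weight exponent `l(t,x) = λ (x² + t² (t−T)²)`. -/
noncomputable def lw (lam T : ℝ) : ℝ → ℝ → ℝ := fun t x => lam * (x^2 + t^2 * (t - T)^2)

noncomputable def l_t (lam T : ℝ) : ℝ → ℝ → ℝ := pt (lw lam T)
noncomputable def l_tt (lam T : ℝ) : ℝ → ℝ → ℝ := pt (pt (lw lam T))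
noncomputable def l_x (lam T : ℝ) : ℝ → ℝ → ℝ := px (lw lam T)
noncomputable def l_xx (lam T : ℝ) : ℝ → ℝ → ℝ := px (px (lw lam T))
noncomputable def l_xxx (lam T : ℝ) : ℝ → ℝ → ℝ := px (px (px (lw lam T)))
noncomputable def l_xxxx (lam T : ℝ) : ℝ → ℝ → ℝ := px (px (px (px (lw lam T))))

/-- `A = l_x⁴ + 4 l_x l_xxx − l_xxxx − 6 l_x² l_xx + 3 l_xx² + l_t² − l_tt`. -/
noncomputable def Aco (lam T : ℝ) : ℝ → ℝ → ℝ := fun t x =>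
  (l_x lam T t x)^4 + 4 * l_x lam T t x * l_xxx lam T t x - l_xxxx lam T t x
    - 6 * (l_x lam T t x)^2 * l_xx lam T t x + 3 * (l_xx lam T t x)^2
    + (l_t lam T t x)^2 - l_tt lam T t x

/-- `G = 6 l_x² − 6 l_xx`. -/
noncomputable def Gco (lam T : ℝ) : ℝ → ℝ → ℝ := fun t x =>
  6 * (l_x lam T t x)^2 - 6 * l_xx lam T t x

/-- `B = 12 l_x l_xx − 4 l_x³ − 4 l_xxx`. -/
noncomputable def Bco (lam T : ℝ) : ℝ → ℝ → ℝ := fun t x =>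
  12 * l_x lam T t x * l_xx lam T t x - 4 * (l_x lam T t x)^3 - 4 * l_xxx lam T t x

/-- `D = −4 l_x`. -/
noncomputable def Dco (lam T : ℝ) : ℝ → ℝ → ℝ := fun t x => -4 * l_x lam T t x

/-- `Φ₁ = −6 l_xx`. -/
noncomputable def Phi1 (lam T : ℝ) : ℝ → ℝ → ℝ := fun t x => -6 * l_xx lam T t x

/-- `Φ = −8 l_x² l_xx`. -/
noncomputable def Phi (lam T : ℝ) : ℝ → ℝ → ℝ := fun t x =>
  -8 * (l_x lam T t x)^2 * l_xx lam T t x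

/-- `G − Φ₁`. -/
noncomputable def GmP1 (lam T : ℝ) : ℝ → ℝ → ℝ := fun t x =>
  Gco lam T t x - Phi1 lam T t x

/-- `B − (G − Φ₁)ₓ`. -/
noncomputable def BmGx (lam T : ℝ) : ℝ → ℝ → ℝ := fun t x =>
  Bco lam T t x - px (GmP1 lam T) t x

/-- `A − Φ`. -/
noncomputable def AmP (lam T : ℝ) : ℝ → ℝ → ℝ := fun t x =>
  Aco lam T t x - Phi lam T t x

private lemma deriv_cpow (c : ℝ) (n : ℕ) (x : ℝ) :
    deriv (fun z : ℝ => c * z ^ n) x = c * n * x ^ (n - 1) := by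
  have h := (hasDerivAt_pow n x).const_mul c
  rw [h.deriv]; ring

private lemma lx_eq (lam T t x : ℝ) : l_x lam T t x = 2 * lam * x := by
  have h : HasDerivAt (fun z : ℝ => lam * (z ^ 2 + t ^ 2 * (t - T) ^ 2))
      (lam * (2 * x ^ 1)) x := by
    have := ((hasDerivAt_pow 2 x).add_const (t ^ 2 * (t - T) ^ 2)).const_mul lam
    simpa using this
  show deriv (fun z => lw lam T t z) x = 2 * lam * x
  simp only [lw]
  rw [h.deriv]; ring

private lemma lxx_eq (lam T t x : ℝ) : l_xx lam T t x = 2 * lam := by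
  show deriv (fun z => px (lw lam T) t z) x = 2 * lam
  have hf : (fun z => px (lw lam T) t z) = fun z : ℝ => 2 * lam * z ^ 1 := by
    funext z; rw [pow_one]; exact lx_eq lam T t z
  rw [hf, deriv_cpow]; ring

private lemma lxxx_eq (lam T t x : ℝ) : l_xxx lam T t x = 0 := by
  show deriv (fun z => px (px (lw lam T)) t z) x = 0
  have hf : (fun z => px (px (lw lam T)) t z) = fun _ : ℝ => 2 * lam := by
    funext z; exact lxx_eq lam T t z
  rw [hf, deriv_const]

private lemma GmP1_eq (lam T t x : ℝ) : GmP1 lam T t x = 24 * lam ^ 2 * x ^ 2 := by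
  simp only [GmP1, Gco, Phi1, lx_eq, lxx_eq]; ring

private lemma pxGmP1_eq (lam T t x : ℝ) : px (GmP1 lam T) t x = 48 * lam ^ 2 * x := by
  show deriv (fun z => GmP1 lam T t z) x = _
  have hf : (fun z => GmP1 lam T t z) = fun z : ℝ => 24 * lam ^ 2 * z ^ 2 := by
    funext z; exact GmP1_eq lam T t z
  rw [hf, deriv_cpow]; ring

private lemma BmGx_eq (lam T t x : ℝ) : BmGx lam T t x = -32 * lam ^ 3 * x ^ 3 := by
  simp only [BmGx, Bco, pxGmP1_eq, lx_eq, lxx_eq, lxxx_eq]; ring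

private lemma pxBmGx_eq (lam T t x : ℝ) : px (BmGx lam T) t x = -96 * lam ^ 3 * x ^ 2 := by
  show deriv (fun z => BmGx lam T t z) x = _
  have hf : (fun z => BmGx lam T t z) = fun z : ℝ => -32 * lam ^ 3 * z ^ 3 := by
    funext z; exact BmGx_eq lam T t z
  rw [hf, deriv_cpow]; ring

private lemma pxPhi1_eq (lam T t x : ℝ) : px (Phi1 lam T) t x = 0 := by
  show deriv (fun z => Phi1 lam T t z) x = 0
  have hf : (fun z => Phi1 lam T t z) = fun _ : ℝ => -6 * (2 * lam) := by
    funext z; simp only [Phi1, lxx_eq]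
  rw [hf, deriv_const]

private lemma pxpxPhi1_eq (lam T t x : ℝ) : px (px (Phi1 lam T)) t x = 0 := by
  show deriv (fun z => px (Phi1 lam T) t z) x = 0
  have hf : (fun z => px (Phi1 lam T) t z) = fun _ : ℝ => (0 : ℝ) := by
    funext z; exact pxPhi1_eq lam T t z
  rw [hf, deriv_const]

private lemma pxGD_eq (lam T t x : ℝ) :
    px (fun t x => GmP1 lam T t x * Dco lam T t x) t x = -576 * lam ^ 3 * x ^ 2 := by
  show deriv (fun z => GmP1 lam T t z * Dco lam T t z) x = _
  have hf : (fun z => GmP1 lam T t z * Dco lam T t z)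
      = fun z : ℝ => (-192 * lam ^ 3) * z ^ 3 := by
    funext z; simp only [GmP1_eq, Dco, lx_eq]; ring
  rw [hf, deriv_cpow]; ring


/-- Coefficient computations from the Carleman weight:
(i) `B − (G − Φ₁)ₓ = −32 λ³ x³`; (ii) the coefficient `F₂` of `u_xx²` equals `352 λ³ x²`. -/
theorem coefficient_identities_F2 (lam T a b : ℝ)
    (hlam : 0 < lam) (hT : 0 < T) (ha : 0 < a) (hab : a ≤ b) :
    (∀ t x : ℝ, BmGx lam T t x = -32 * lam^3 * x^3) ∧
    (∀ t x : ℝ,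
      3 * px (BmGx lam T) t x + px (px (Phi1 lam T)) t x + 2 * Phi lam T t x
        + 2 * GmP1 lam T t x * Phi1 lam T t x
        - 2 * px (GmP1 lam T) t x * Dco lam T t x
        - px (fun t x => GmP1 lam T t x * Dco lam T t x) t x
      = 352 * lam^3 * x^2) := by
  constructor
  · intro t x; exact BmGx_eq lam T t x
  · intro t x
    rw [pxBmGx_eq, pxpxPhi1_eq, pxGD_eq, pxGmP1_eq, GmP1_eq]
    simp only [Phi, Phi1, Dco, lx_eq, lxx_eq]
    ring
end

section
/- Let T > 0 and 0 < a ≤ b, let l(t,x) = λ(x² + t²(t−T)²), and let A, B, G, D, Φ₁, Φ be the coefficient functions defined from l as in the context. Define F₄ = −( (G − Φ₁)ₓ Φ )ₓ − ( (A − Φ)( B − (G − Φ₁)ₓ ) )ₓ + Φ_tt + ( (G − Φ₁) Φ )ₓₓ + Φₓₓₓₓ + ( (A − Φ) Φ₁ )ₓₓ − ( (A − Φ) D )ₓₓₓ + 2 (A − Φ) Φ + 2 ( l_t (A − Φ) )_t. Then there exist constants C > 0 and λ₀ > 0, depending only on a, b, T, such that for all λ ≥ λ₀ and all (t,x) ∈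 [0,T] × [a,b]: F₄(t,x) ≥ C λ⁷. -/
/-- `F₄`, the coefficient `H₂` of `u²` in the Carleman identity. -/
noncomputable def F4 (lam T : ℝ) : ℝ → ℝ → ℝ := fun t x =>
  -(px (fun t x => px (GmP1 lam T) t x * Phi lam T t x) t x)
    - px (fun t x => AmP lam T t x * BmGx lam T t x) t x
    + pt (pt (Phi lam T)) t x
    + px (px (fun t x => GmP1 lam T t x * Phi lam T t x)) t x
    + px (px (px (px (Phi lam T)))) t x
    + px (px (fun t x => AmP lam T t x * Phi1 lam T t x)) t x
    - px (px (px (fun t x => AmP lam T t x * Dco lam T t x))) t x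
    + 2 * AmP lam T t x * Phi lam T t x
    + 2 * pt (fun t x => l_t lam T t x * AmP lam T t x) t x

section CarlemanAux

private lemma dP (c0 c1 c2 c3 c4 c5 c6 c7 c8 c9 x : ℝ) :
    deriv (fun z : ℝ => c0 + c1*z^1 + c2*z^2 + c3*z^3 + c4*z^4 + c5*z^5
      + c6*z^6 + c7*z^7 + c8*z^8 + c9*z^9) x
    = c1 + 2*c2*x^1 + 3*c3*x^2 + 4*c4*x^3 + 5*c5*x^4 + 6*c6*x^5 + 7*c7*x^6
      + 8*c8*x^7 + 9*c9*x^8 := by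
  have h : HasDerivAt (fun z : ℝ => c0 + c1*z^1 + c2*z^2 + c3*z^3 + c4*z^4 + c5*z^5
      + c6*z^6 + c7*z^7 + c8*z^8 + c9*z^9)
      (0 + c1*(((1:ℕ):ℝ)*x^(1-1)) + c2*(((2:ℕ):ℝ)*x^(2-1)) + c3*(((3:ℕ):ℝ)*x^(3-1))
        + c4*(((4:ℕ):ℝ)*x^(4-1)) + c5*(((5:ℕ):ℝ)*x^(5-1)) + c6*(((6:ℕ):ℝ)*x^(6-1))
        + c7*(((7:ℕ):ℝ)*x^(7-1)) + c8*(((8:ℕ):ℝ)*x^(8-1)) + c9*(((9:ℕ):ℝ)*x^(9-1))) x := by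
    exact (((((((((hasDerivAt_const x c0).add ((hasDerivAt_pow 1 x).const_mul c1)).add
      ((hasDerivAt_pow 2 x).const_mul c2)).add ((hasDerivAt_pow 3 x).const_mul c3)).add
      ((hasDerivAt_pow 4 x).const_mul c4)).add ((hasDerivAt_pow 5 x).const_mul c5)).add
      ((hasDerivAt_pow 6 x).const_mul c6)).add ((hasDerivAt_pow 7 x).const_mul c7)).add
      ((hasDerivAt_pow 8 x).const_mul c8)).add ((hasDerivAt_pow 9 x).const_mul c9)
  rw [h.deriv]
  norm_num
  ring

private lemma px_congr (f : ℝ → ℝ → ℝ) (g : ℝ → ℝ) (t x : ℝ) (h : ∀ z, f t z = g z) :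
    px f t x = deriv g x := by
  have hg : (fun z => f t z) = g := funext h
  show deriv (fun z => f t z) x = deriv g x
  rw [hg]

private lemma pt_congr (f : ℝ → ℝ → ℝ) (g : ℝ → ℝ) (t x : ℝ) (h : ∀ s, f s x = g s) :
    pt f t x = deriv g t := by
  have hg : (fun s => f s x) = g := funext h
  show deriv (fun s => f s x) t = deriv g t
  rw [hg]

end CarlemanAux

section CarlemanDerivs

private lemma LxEq (lam T t x : ℝ) : px (lw lam T) t x = 2*lam*x := by
  rw [px_congr (lw lam T) (fun z => (lam*(t^2*(t-T)^2)) + 0*z^1 + lam*z^2 + 0*z^3 + 0*z^4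
      + 0*z^5 + 0*z^6 + 0*z^7 + 0*z^8 + 0*z^9) t x (fun z => by simp only [lw]; ring), dP]
  ring

private lemma LxxEq (lam T t x : ℝ) : px (px (lw lam T)) t x = 2*lam := by
  rw [px_congr (px (lw lam T)) (fun z => 0 + (2*lam)*z^1 + 0*z^2 + 0*z^3 + 0*z^4
      + 0*z^5 + 0*z^6 + 0*z^7 + 0*z^8 + 0*z^9) t x (fun z => by rw [LxEq]; ring), dP]
  ring

private lemma LxxxEq (lam T t x : ℝ) : px (px (px (lw lam T))) t x = 0 := by
  rw [px_congr (px (px (lw lam T))) (fun z => (2*lam) + 0*z^1 + 0*z^2 + 0*z^3 + 0*z^4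
      + 0*z^5 + 0*z^6 + 0*z^7 + 0*z^8 + 0*z^9) t x (fun z => by rw [LxxEq]; ring), dP]
  ring

private lemma LxxxxEq (lam T t x : ℝ) : px (px (px (px (lw lam T)))) t x = 0 := by
  rw [px_congr (px (px (px (lw lam T)))) (fun z => 0 + 0*z^1 + 0*z^2 + 0*z^3 + 0*z^4
      + 0*z^5 + 0*z^6 + 0*z^7 + 0*z^8 + 0*z^9) t x (fun z => by rw [LxxxEq]; ring), dP]
  ring

private lemma LtEq (lam T t x : ℝ) :
    pt (lw lam T) t x = lam*(4*t^3 - 6*T*t^2 + 2*T^2*t) := by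
  rw [pt_congr (lw lam T) (fun s => (lam*x^2) + 0*s^1 + (lam*T^2)*s^2 + (-2*lam*T)*s^3
      + lam*s^4 + 0*s^5 + 0*s^6 + 0*s^7 + 0*s^8 + 0*s^9) t x (fun s => by simp only [lw]; ring), dP]
  ring

private lemma LttEq (lam T t x : ℝ) :
    pt (pt (lw lam T)) t x = lam*(12*t^2 - 12*T*t + 2*T^2) := by
  rw [pt_congr (pt (lw lam T)) (fun s => 0 + (2*lam*T^2)*s^1 + (-6*lam*T)*s^2 + (4*lam)*s^3
      + 0*s^4 + 0*s^5 + 0*s^6 + 0*s^7 + 0*s^8 + 0*s^9) t x (fun s => by rw [LtEq]; ring), dP]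
  ring

private lemma PhiEq (lam T t x : ℝ) : Phi lam T t x = -64*lam^3*x^2 := by
  simp only [Phi, l_x, l_xx]; rw [LxxEq, LxEq]; ring

private lemma Phi1Eq (lam T t x : ℝ) : Phi1 lam T t x = -12*lam := by
  simp only [Phi1, l_xx]; rw [LxxEq]; ring

private lemma DcoEq (lam T t x : ℝ) : Dco lam T t x = -8*lam*x := by
  simp only [Dco, l_x]; rw [LxEq]; ring

private lemma GmP1Eq (lam T t x : ℝ) : GmP1 lam T t x = 24*lam^2*x^2 := by
  simp only [GmP1, Gco, Phi1, l_x, l_xx]; rw [LxxEq, LxEq]; ring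

private lemma pxGmP1Eq (lam T t x : ℝ) : px (GmP1 lam T) t x = 48*lam^2*x := by
  rw [px_congr (GmP1 lam T) (fun z => 0 + 0*z^1 + (24*lam^2)*z^2 + 0*z^3 + 0*z^4
      + 0*z^5 + 0*z^6 + 0*z^7 + 0*z^8 + 0*z^9) t x (fun z => by rw [GmP1Eq]; ring), dP]
  ring

private lemma AmPEq (lam T t x : ℝ) :
    AmP lam T t x = 16*lam^4*x^4 + 16*lam^3*x^2 + 12*lam^2
      + (lam*(4*t^3 - 6*T*t^2 + 2*T^2*t))^2 - lam*(12*t^2 - 12*T*t + 2*T^2) := by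
  simp only [AmP, Aco, Phi, l_x, l_xx, l_xxx, l_xxxx, l_t, l_tt]
  rw [LxxxxEq, LxxxEq, LttEq, LtEq, LxxEq, LxEq]; ring

private lemma BmGxEq (lam T t x : ℝ) : BmGx lam T t x = -32*lam^3*x^3 := by
  simp only [BmGx, Bco, l_x, l_xx, l_xxx]
  rw [pxGmP1Eq, LxxxEq, LxxEq, LxEq]; ring

end CarlemanDerivs

section CarlemanTerms

private lemma hT1 (lam T t x : ℝ) :
    px (fun t x => px (GmP1 lam T) t x * Phi lam T t x) t x = -9216*lam^5*x^2 := by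
  rw [px_congr _ (fun z => 0 + 0*z^1 + 0*z^2 + (-3072*lam^5)*z^3 + 0*z^4
      + 0*z^5 + 0*z^6 + 0*z^7 + 0*z^8 + 0*z^9) t x
      (fun z => by simp only [pxGmP1Eq, PhiEq]; ring), dP]
  ring

private lemma hT2 (lam T t x : ℝ) :
    px (fun t x => AmP lam T t x * BmGx lam T t x) t x
    = -96*lam^3*(12*lam^2 + (lam*(4*t^3 - 6*T*t^2 + 2*T^2*t))^2
        - lam*(12*t^2 - 12*T*t + 2*T^2))*x^2 - 2560*lam^6*x^4 - 3584*lam^7*x^6 := by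
  rw [px_congr _ (fun z => 0 + 0*z^1 + 0*z^2
      + (-32*lam^3*(12*lam^2 + (lam*(4*t^3 - 6*T*t^2 + 2*T^2*t))^2
          - lam*(12*t^2 - 12*T*t + 2*T^2)))*z^3 + 0*z^4
      + (-512*lam^6)*z^5 + 0*z^6 + (-512*lam^7)*z^7 + 0*z^8 + 0*z^9) t x
      (fun z => by simp only [AmPEq, BmGxEq]; ring), dP]
  ring

private lemma ptPhi (lam T t x : ℝ) : pt (Phi lam T) t x = 0 := by
  rw [pt_congr (Phi lam T) (fun s => (-64*lam^3*x^2) + 0*s^1 + 0*s^2 + 0*s^3 + 0*s^4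
      + 0*s^5 + 0*s^6 + 0*s^7 + 0*s^8 + 0*s^9) t x (fun s => by rw [PhiEq]; ring), dP]
  ring

private lemma hT3 (lam T t x : ℝ) : pt (pt (Phi lam T)) t x = 0 := by
  rw [pt_congr (pt (Phi lam T)) (fun s => 0 + 0*s^1 + 0*s^2 + 0*s^3 + 0*s^4
      + 0*s^5 + 0*s^6 + 0*s^7 + 0*s^8 + 0*s^9) t x (fun s => by rw [ptPhi]; ring), dP]
  ring

private lemma hT4a (lam T t x : ℝ) :
    px (fun t x => GmP1 lam T t x * Phi lam T t x) t x = -6144*lam^5*x^3 := by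
  rw [px_congr _ (fun z => 0 + 0*z^1 + 0*z^2 + 0*z^3 + (-1536*lam^5)*z^4
      + 0*z^5 + 0*z^6 + 0*z^7 + 0*z^8 + 0*z^9) t x
      (fun z => by simp only [GmP1Eq, PhiEq]; ring), dP]
  ring

private lemma hT4 (lam T t x : ℝ) :
    px (px (fun t x => GmP1 lam T t x * Phi lam T t x)) t x = -18432*lam^5*x^2 := by
  rw [px_congr _ (fun z => 0 + 0*z^1 + 0*z^2 + (-6144*lam^5)*z^3 + 0*z^4
      + 0*z^5 + 0*z^6 + 0*z^7 + 0*z^8 + 0*z^9) t x (fun z => by rw [hT4a]; ring), dP]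
  ring

private lemma pxPhi (lam T t x : ℝ) : px (Phi lam T) t x = -128*lam^3*x := by
  rw [px_congr (Phi lam T) (fun z => 0 + 0*z^1 + (-64*lam^3)*z^2 + 0*z^3 + 0*z^4
      + 0*z^5 + 0*z^6 + 0*z^7 + 0*z^8 + 0*z^9) t x (fun z => by rw [PhiEq]; ring), dP]
  ring

private lemma pxxPhi (lam T t x : ℝ) : px (px (Phi lam T)) t x = -128*lam^3 := by
  rw [px_congr (px (Phi lam T)) (fun z => 0 + (-128*lam^3)*z^1 + 0*z^2 + 0*z^3 + 0*z^4
      + 0*z^5 + 0*z^6 + 0*z^7 + 0*z^8 + 0*z^9) t x (fun z => by rw [pxPhi]; ring), dP]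
  ring

private lemma pxxxPhi (lam T t x : ℝ) : px (px (px (Phi lam T))) t x = 0 := by
  rw [px_congr (px (px (Phi lam T))) (fun z => (-128*lam^3) + 0*z^1 + 0*z^2 + 0*z^3 + 0*z^4
      + 0*z^5 + 0*z^6 + 0*z^7 + 0*z^8 + 0*z^9) t x (fun z => by rw [pxxPhi]; ring), dP]
  ring

private lemma hT5 (lam T t x : ℝ) : px (px (px (px (Phi lam T)))) t x = 0 := by
  rw [px_congr (px (px (px (Phi lam T)))) (fun z => 0 + 0*z^1 + 0*z^2 + 0*z^3 + 0*z^4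
      + 0*z^5 + 0*z^6 + 0*z^7 + 0*z^8 + 0*z^9) t x (fun z => by rw [pxxxPhi]; ring), dP]
  ring

private lemma hT6a (lam T t x : ℝ) :
    px (fun t x => AmP lam T t x * Phi1 lam T t x) t x = -768*lam^5*x^3 - 384*lam^4*x := by
  rw [px_congr _ (fun z => (-12*lam*(12*lam^2 + (lam*(4*t^3 - 6*T*t^2 + 2*T^2*t))^2
      - lam*(12*t^2 - 12*T*t + 2*T^2))) + 0*z^1 + (-192*lam^4)*z^2 + 0*z^3
      + (-192*lam^5)*z^4 + 0*z^5 + 0*z^6 + 0*z^7 + 0*z^8 + 0*z^9) t x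
      (fun z => by simp only [AmPEq, Phi1Eq]; ring), dP]
  ring

private lemma hT6 (lam T t x : ℝ) :
    px (px (fun t x => AmP lam T t x * Phi1 lam T t x)) t x
    = -2304*lam^5*x^2 - 384*lam^4 := by
  rw [px_congr _ (fun z => 0 + (-384*lam^4)*z^1 + 0*z^2 + (-768*lam^5)*z^3 + 0*z^4
      + 0*z^5 + 0*z^6 + 0*z^7 + 0*z^8 + 0*z^9) t x (fun z => by rw [hT6a]; ring), dP]
  ring

private lemma hT7a (lam T t x : ℝ) :
    px (fun t x => AmP lam T t x * Dco lam T t x) t x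
    = -8*lam*(12*lam^2 + (lam*(4*t^3 - 6*T*t^2 + 2*T^2*t))^2
        - lam*(12*t^2 - 12*T*t + 2*T^2)) - 384*lam^4*x^2 - 640*lam^5*x^4 := by
  rw [px_congr _ (fun z => 0 + (-8*lam*(12*lam^2 + (lam*(4*t^3 - 6*T*t^2 + 2*T^2*t))^2
      - lam*(12*t^2 - 12*T*t + 2*T^2)))*z^1 + 0*z^2 + (-128*lam^4)*z^3 + 0*z^4
      + (-128*lam^5)*z^5 + 0*z^6 + 0*z^7 + 0*z^8 + 0*z^9) t x
      (fun z => by simp only [AmPEq, DcoEq]; ring), dP]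
  ring

private lemma hT7b (lam T t x : ℝ) :
    px (px (fun t x => AmP lam T t x * Dco lam T t x)) t x
    = -768*lam^4*x - 2560*lam^5*x^3 := by
  rw [px_congr _ (fun z => (-8*lam*(12*lam^2 + (lam*(4*t^3 - 6*T*t^2 + 2*T^2*t))^2
      - lam*(12*t^2 - 12*T*t + 2*T^2))) + 0*z^1 + (-384*lam^4)*z^2 + 0*z^3
      + (-640*lam^5)*z^4 + 0*z^5 + 0*z^6 + 0*z^7 + 0*z^8 + 0*z^9) t x
      (fun z => by rw [hT7a]; ring), dP]
  ring

private lemma hT7 (lam T t x : ℝ) :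
    px (px (px (fun t x => AmP lam T t x * Dco lam T t x))) t x
    = -768*lam^4 - 7680*lam^5*x^2 := by
  rw [px_congr _ (fun z => 0 + (-768*lam^4)*z^1 + 0*z^2 + (-2560*lam^5)*z^3 + 0*z^4
      + 0*z^5 + 0*z^6 + 0*z^7 + 0*z^8 + 0*z^9) t x (fun z => by rw [hT7b]; ring), dP]
  ring

private lemma hT9 (lam T t x : ℝ) :
    pt (fun t x => l_t lam T t x * AmP lam T t x) t x
    = (-4*lam^2*T^4 + 24*lam^3*T^2 + 32*lam^4*x^2*T^2 + 32*lam^5*x^4*T^2)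
      + 2*(36*lam^2*T^3 - 72*lam^3*T - 96*lam^4*x^2*T - 96*lam^5*x^4*T)*t^1
      + 3*(-104*lam^2*T^2 + 48*lam^3 + 8*lam^3*T^6 + 64*lam^4*x^2 + 64*lam^5*x^4)*t^2
      + 4*(120*lam^2*T - 72*lam^3*T^5)*t^3
      + 5*(-48*lam^2 + 264*lam^3*T^4)*t^4
      + 6*(-504*lam^3*T^3)*t^5
      + 7*(528*lam^3*T^2)*t^6
      + 8*(-288*lam^3*T)*t^7
      + 9*(64*lam^3)*t^8 := by
  rw [pt_congr _ (fun s => 0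
      + (-4*lam^2*T^4 + 24*lam^3*T^2 + 32*lam^4*x^2*T^2 + 32*lam^5*x^4*T^2)*s^1
      + (36*lam^2*T^3 - 72*lam^3*T - 96*lam^4*x^2*T - 96*lam^5*x^4*T)*s^2
      + (-104*lam^2*T^2 + 48*lam^3 + 8*lam^3*T^6 + 64*lam^4*x^2 + 64*lam^5*x^4)*s^3
      + (120*lam^2*T - 72*lam^3*T^5)*s^4
      + (-48*lam^2 + 264*lam^3*T^4)*s^5
      + (-504*lam^3*T^3)*s^6
      + (528*lam^3*T^2)*s^7
      + (-288*lam^3*T)*s^8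
      + (64*lam^3)*s^9) t x
      (fun s => by simp only [l_t, LtEq, AmPEq]; ring), dP]

private lemma F4Eq (lam T t x : ℝ) :
    F4 lam T t x = 1536*lam^7*x^6 + 512*lam^6*x^4 - 4224*lam^5*x^2 + 384*lam^4
      - 32*lam^5*x^2*(4*t^3 - 6*T*t^2 + 2*T^2*t)^2
      + 32*lam^5*x^4*(12*t^2 - 12*T*t + 2*T^2)
      + 64*lam^4*x^2*(12*t^2 - 12*T*t + 2*T^2)
      + 24*lam^3*(12*t^2 - 12*T*t + 2*T^2)
      + 6*lam^3*(4*t^3 - 6*T*t^2 + 2*T^2*t)^2*(12*t^2 - 12*T*t + 2*T^2)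
      - 2*lam^2*(12*t^2 - 12*T*t + 2*T^2)^2
      - 2*lam^2*(4*t^3 - 6*T*t^2 + 2*T^2*t)*(24*t - 12*T) := by
  simp only [F4]
  rw [hT1, hT2, hT3, hT4, hT5, hT6, hT7, hT9, AmPEq, PhiEq]
  ring

end CarlemanTerms

private lemma t_sq_bnds {t T : ℝ} (h0 : 0 ≤ t) (h1 : t ≤ T) :
    t^2 ≤ T^2 ∧ (t-T)^2 ≤ T^2 ∧ (2*t-T)^2 ≤ T^2 := by
  refine ⟨by nlinarith, by nlinarith, by nlinarith [mul_nonneg h0 (sub_nonneg.mpr h1)]⟩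

private lemma q_bnds {t T : ℝ} (h0 : 0 ≤ t) (h1 : t ≤ T) :
    -(26*T^2) ≤ 12*t^2 - 12*T*t + 2*T^2 ∧ 12*t^2 - 12*T*t + 2*T^2 ≤ 26*T^2 := by
  constructor <;> nlinarith

private lemma abs_bnds_of_sq {p A : ℝ} (hA : 0 < A) (h : p^2 ≤ A^2) :
    p ≤ A ∧ -A ≤ p := by
  constructor <;> nlinarith [sq_nonneg (p - A), sq_nonneg (p + A)]


set_option maxHeartbeats 1000000

/-- The coefficient `F₄ = H₂` of `u²` in the Carleman estimate is bounded below
by `C λ⁷` on `[0,T] × [a,b]` for `λ` large. -/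
theorem coefficient_bound_F4 (T a b : ℝ) (hT : 0 < T) (ha : 0 < a) (hab : a ≤ b) :
    ∃ C > (0:ℝ), ∃ lam₀ > (0:ℝ), ∀ lam ≥ lam₀,
      ∀ t ∈ Set.Icc (0:ℝ) T, ∀ x ∈ Set.Icc a b,
        F4 lam T t x ≥ C * lam^7 := by
  have hb : 0 < b := lt_of_lt_of_le ha hab
  obtain ⟨K, hK⟩ : ∃ K : ℝ, K = 4224*b^2 + 128*b^2*T^6 + 832*b^4*T^2 + 1664*b^2*T^2
      + 624*T^2 + 624*T^8 + 1400*T^4 := ⟨_, rfl⟩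
  have hK0 : 0 < K := by rw [hK]; positivity
  have ha6 : (0:ℝ) < 768*a^6 := by positivity
  refine ⟨768*a^6, ha6, 1 + K/(768*a^6), by positivity, ?_⟩
  intro lam hlam t ht x hx
  obtain ⟨ht0, htT⟩ := ht
  obtain ⟨hax, hxb⟩ := hx
  have hx0 : 0 ≤ x := le_trans ha.le hax
  have hlam1 : (1:ℝ) ≤ lam := by
    have : 0 ≤ K/(768*a^6) := le_of_lt (div_pos hK0 ha6)
    linarith
  have hlam0 : (0:ℝ) < lam := lt_of_lt_of_le one_pos hlam1
  have hlamK : K ≤ 768*a^6*lam := by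
    have h2 : 768*a^6*(1 + K/(768*a^6)) ≤ 768*a^6*lam :=
      mul_le_mul_of_nonneg_left hlam ha6.le
    have h3 : 768*a^6*(1 + K/(768*a^6)) = 768*a^6 + K := by field_simp
    linarith
  -- abbreviations
  obtain ⟨p, hpd⟩ : ∃ p : ℝ, p = 4*t^3 - 6*T*t^2 + 2*T^2*t := ⟨_, rfl⟩
  obtain ⟨q, hqd⟩ : ∃ q : ℝ, q = 12*t^2 - 12*T*t + 2*T^2 := ⟨_, rfl⟩
  obtain ⟨r, hrd⟩ : ∃ r : ℝ, r = 24*t - 12*T := ⟨_, rfl⟩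
  -- bounds on p, q, r
  obtain ⟨h1, h2, h3⟩ := t_sq_bnds ht0 htT
  have hp2 : p^2 ≤ 4*T^6 := by
    have h23 : (t-T)^2*(2*t-T)^2 ≤ T^2*T^2 :=
      mul_le_mul h2 h3 (sq_nonneg _) (sq_nonneg T)
    have h123 : t^2*((t-T)^2*(2*t-T)^2) ≤ T^2*(T^2*T^2) :=
      mul_le_mul h1 h23 (by positivity) (sq_nonneg T)
    have hpe : p^2 = 4*(t^2*((t-T)^2*(2*t-T)^2)) := by rw [hpd]; ring
    have hTe : (4:ℝ)*T^6 = 4*(T^2*(T^2*T^2)) := by ring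
    rw [hpe, hTe]; linarith
  have hp2' : p^2 ≤ (2*T^3)^2 := by linarith [hp2, sq_nonneg T]
  obtain ⟨hpu, hpl⟩ := abs_bnds_of_sq (by positivity : (0:ℝ) < 2*T^3) hp2'
  have hql : -(26*T^2) ≤ q := by rw [hqd]; exact (q_bnds ht0 htT).1
  have hqu : q ≤ 26*T^2 := by rw [hqd]; exact (q_bnds ht0 htT).2
  have hrl : -(12*T) ≤ r := by rw [hrd]; linarith
  have hru : r ≤ 12*T := by rw [hrd]; linarith
  -- powers of lam and x
  have h56 : lam^5 ≤ lam^6 := pow_le_pow_right₀ hlam1 (by norm_num)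
  have h46 : lam^4 ≤ lam^6 := pow_le_pow_right₀ hlam1 (by norm_num)
  have h36 : lam^3 ≤ lam^6 := pow_le_pow_right₀ hlam1 (by norm_num)
  have h26 : lam^2 ≤ lam^6 := pow_le_pow_right₀ hlam1 (by norm_num)
  have hx2 : x^2 ≤ b^2 := pow_le_pow_left₀ hx0 hxb 2
  have hx4 : x^4 ≤ b^4 := pow_le_pow_left₀ hx0 hxb 4
  have hx6 : a^6 ≤ x^6 := pow_le_pow_left₀ ha.le hax 6
  have hl3 : (0:ℝ) ≤ lam^3 := by positivity
  have hl5 : (0:ℝ) ≤ lam^5 := by positivity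
  have hl6 : (0:ℝ) ≤ lam^6 := by positivity
  have hl7 : (0:ℝ) ≤ lam^7 := by positivity
  have i1 : lam^5*x^2 ≤ lam^6*b^2 := mul_le_mul h56 hx2 (sq_nonneg x) hl6
  have i2 : lam^5*x^4 ≤ lam^6*b^4 := mul_le_mul h56 hx4 (by positivity) hl6
  have i4 : lam^4*x^2 ≤ lam^6*b^2 :=
    mul_le_mul h46 hx2 (sq_nonneg x) hl6
  -- term estimates
  have g0 : 1536*a^6*lam^7 ≤ 1536*lam^7*x^6 := by
    have := mul_le_mul_of_nonneg_left hx6 hl7; linarith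
  have g1 : (0:ℝ) ≤ 512*lam^6*x^4 := by positivity
  have g2 : 4224*lam^5*x^2 ≤ 4224*b^2*lam^6 := by linarith [i1]
  have g3 : (0:ℝ) ≤ 384*lam^4 := by positivity
  have g4 : 32*lam^5*x^2*p^2 ≤ 128*b^2*T^6*lam^6 := by
    have s1 : (lam^5*x^2)*p^2 ≤ (lam^6*b^2)*(4*T^6) :=
      mul_le_mul i1 hp2 (sq_nonneg p) (mul_nonneg hl6 (sq_nonneg b))
    linarith [s1]
  have g5 : -(832*b^4*T^2*lam^6) ≤ 32*lam^5*x^4*q := by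
    have s1 : lam^5*x^4*(-(26*T^2)) ≤ lam^5*x^4*q :=
      mul_le_mul_of_nonneg_left hql (by positivity)
    have s2 : lam^5*x^4*(26*T^2) ≤ lam^6*b^4*(26*T^2) :=
      mul_le_mul_of_nonneg_right i2 (by positivity)
    linarith [s1, s2]
  have g6 : -(1664*b^2*T^2*lam^6) ≤ 64*lam^4*x^2*q := by
    have s1 : lam^4*x^2*(-(26*T^2)) ≤ lam^4*x^2*q :=
      mul_le_mul_of_nonneg_left hql (by positivity)
    have s2 : lam^4*x^2*(26*T^2) ≤ lam^6*b^2*(26*T^2) :=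
      mul_le_mul_of_nonneg_right i4 (by positivity)
    linarith [s1, s2]
  have g7 : -(624*T^2*lam^6) ≤ 24*lam^3*q := by
    have s1 : lam^3*(-(26*T^2)) ≤ lam^3*q := mul_le_mul_of_nonneg_left hql hl3
    have s2 : lam^3*(26*T^2) ≤ lam^6*(26*T^2) :=
      mul_le_mul_of_nonneg_right h36 (by positivity)
    linarith [s1, s2]
  have i3 : -(104*T^8) ≤ p^2*q := by
    have s1 : p^2*(-(26*T^2)) ≤ p^2*q := mul_le_mul_of_nonneg_left hql (sq_nonneg p)
    have s2 : p^2*(26*T^2) ≤ (4*T^6)*(26*T^2) :=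
      mul_le_mul_of_nonneg_right hp2 (by positivity)
    linarith [s1, s2]
  have g8 : -(624*T^8*lam^6) ≤ 6*lam^3*p^2*q := by
    have s1 : lam^3*(-(104*T^8)) ≤ lam^3*(p^2*q) := mul_le_mul_of_nonneg_left i3 hl3
    have s2 : lam^3*(104*T^8) ≤ lam^6*(104*T^8) :=
      mul_le_mul_of_nonneg_right h36 (by positivity)
    linarith [s1, s2]
  have iq2 : q^2 ≤ 676*T^4 := by
    have := mul_nonneg (by linarith : (0:ℝ) ≤ 26*T^2 - q) (by linarith : (0:ℝ) ≤ q + 26*T^2)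
    linarith [this]
  have g9 : 2*lam^2*q^2 ≤ 1352*T^4*lam^6 := by
    have s1 : lam^2*q^2 ≤ lam^6*q^2 := mul_le_mul_of_nonneg_right h26 (sq_nonneg q)
    have s2 : lam^6*q^2 ≤ lam^6*(676*T^4) := mul_le_mul_of_nonneg_left iq2 hl6
    linarith [s1, s2]
  have ipr : p*r ≤ 24*T^4 := by
    have s1 := mul_nonneg (by linarith : (0:ℝ) ≤ 2*T^3 - p) (by linarith : (0:ℝ) ≤ 12*T + r)
    have s2 := mul_nonneg (by linarith : (0:ℝ) ≤ 2*T^3 + p) (by linarith : (0:ℝ) ≤ 12*T - r)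
    linarith [s1, s2]
  have g10 : 2*lam^2*p*r ≤ 48*T^4*lam^6 := by
    have s1 : lam^2*(p*r) ≤ lam^2*(24*T^4) := mul_le_mul_of_nonneg_left ipr (sq_nonneg lam)
    have s2 : lam^2*(24*T^4) ≤ lam^6*(24*T^4) :=
      mul_le_mul_of_nonneg_right h26 (by positivity)
    linarith [s1, s2]
  have gK : K*lam^6 ≤ 768*a^6*lam^7 := by
    have := mul_le_mul_of_nonneg_right hlamK hl6
    linarith [this]
  rw [F4Eq, ← hpd, ← hqd, ← hrd]
  rw [hK] at gK
  linarith [g0, g1, g2, g3, g4, g5, g6, g7, g8, g9, g10, gK]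
end

section
/- Let λ ∈ ℝ, let a < b be real numbers, and let φ(x) = λx². Then for every three-times continuously differentiable function v : [a,b] → ℝ with v(a) = v(b) = 0 and v′(a) = v′(b) = 0, one has ∫ₐᵇ v(x) ( −4 φ′(x)³ v′(x) − 6 φ″(x) v″(x) − 4 φ′(x) v‴(x) ) dx = ∫ₐᵇ 6 φ′(x)² φ″(x) v(x)² dx = 48 λ³ ∫ₐᵇ x² v(x)² dx. -/
set_option maxHeartbeats 1000000


open MeasureTheory

/-- The spatial part `φ(x) = λ x²` of the Carleman weight. -/
noncomputable def phiW (lam : ℝ) : ℝ → ℝ := fun x => lam * x^2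

lemma deriv_phiW (lam : ℝ) : deriv (phiW lam) = fun x => 2*lam*x := by
  funext x
  have h : HasDerivAt (phiW lam) (lam * ((2:ℕ) * x^(2-1))) x :=
    (hasDerivAt_pow 2 x).const_mul lam
  rw [h.deriv]; push_cast; ring

lemma deriv2_phiW (lam : ℝ) : deriv^[2] (phiW lam) = fun _ => 2*lam := by
  show deriv (deriv (phiW lam)) = _
  rw [deriv_phiW]
  funext x
  have h : HasDerivAt (fun x : ℝ => 2*lam*x) (2*lam*1) x :=
    (hasDerivAt_id x).const_mul (2*lam)
  rw [h.deriv]; ring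

/-- The integral identity for the cross term `A₃`: with `φ(x) = λx²` and `v`
vanishing together with `v′` at both endpoints,
`∫ v (−4 φ′³ v′ − 6 φ″ v″ − 4 φ′ v‴) dx = ∫ 6 φ′² φ″ v² dx = 48 λ³ ∫ x² v² dx`. -/
theorem cross_term_identity (lam a b : ℝ) (hab : a < b) :
    ∀ v : ℝ → ℝ, ContDiff ℝ 3 v →
      v a = 0 → v b = 0 → deriv v a = 0 → deriv v b = 0 →
      ((∫ x in a..b, v x *
            (-4 * (deriv (phiW lam) x)^3 * deriv v x
              - 6 * deriv^[2] (phiW lam) x * deriv^[2] v x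
              - 4 * deriv (phiW lam) x * deriv^[3] v x))
          = ∫ x in a..b, 6 * (deriv (phiW lam) x)^2 * deriv^[2] (phiW lam) x * (v x)^2)
      ∧ ((∫ x in a..b, 6 * (deriv (phiW lam) x)^2 * deriv^[2] (phiW lam) x * (v x)^2)
          = 48 * lam^3 * ∫ x in a..b, x^2 * (v x)^2) := by
  intro v hv ha hb ha' hb'
  -- smoothness of the derivatives of v
  have hv1 : ContDiff ℝ 2 (deriv v) := by
    rw [show (3:WithTop ℕ∞) = 2 + 1 by norm_num, contDiff_succ_iff_deriv] at hv
    exact hv.2.2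
  have hv2 : ContDiff ℝ 1 (deriv (deriv v)) := by
    rw [show (2:WithTop ℕ∞) = 1 + 1 by norm_num, contDiff_succ_iff_deriv] at hv1
    exact hv1.2.2
  have hv3 : Continuous (deriv (deriv (deriv v))) := by
    rw [contDiff_one_iff_deriv] at hv2
    exact hv2.2
  have hV : ∀ x, HasDerivAt v (deriv v x) x := fun x =>
    ((hv.differentiable (by norm_num)) x).hasDerivAt
  have hV1 : ∀ x, HasDerivAt (deriv v) (deriv (deriv v) x) x := fun x =>
    ((hv1.differentiable (by norm_num)) x).hasDerivAt
  have hV2 : ∀ x, HasDerivAt (deriv (deriv v)) (deriv (deriv (deriv v)) x) x := fun x =>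
    ((hv2.differentiable (by norm_num)) x).hasDerivAt
  have cv : Continuous v := hv.continuous
  have cv1 : Continuous (deriv v) := hv1.continuous
  have cv2 : Continuous (deriv (deriv v)) := hv2.continuous
  -- the antiderivative of (left integrand − right integrand)
  set F : ℝ → ℝ := fun x => -16*lam^3*x^3*(v x)^2 - 4*lam*(v x)*(deriv v x)
      - 8*lam*x*(v x)*(deriv (deriv v) x) + 4*lam*x*(deriv v x)^2 with hFdef
  set G : ℝ → ℝ := fun x => v x *
      (-4 * (2*lam*x)^3 * deriv v x - 6 * (2*lam) * deriv (deriv v) x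
        - 4 * (2*lam*x) * deriv (deriv (deriv v)) x)
      - 48*lam^3*x^2*(v x)^2 with hGdef
  have hF : ∀ x, HasDerivAt F (G x) x := by
    intro x
    have h1 : HasDerivAt (fun x => -16*lam^3*x^3*(v x)^2)
        ((-16*lam^3*((3:ℕ)*x^2)) * (v x)^2 + (-16*lam^3*x^3) * (2*(v x)*deriv v x)) x := by
      have := (((hasDerivAt_pow 3 x).const_mul (-16*lam^3)).mul
        (((hV x).pow 2)))
      convert this using 1
      all_goals (try funext y)
      all_goals (try simp only [id_eq, Pi.mul_apply, Pi.pow_apply])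
      all_goals (try push_cast)
      all_goals (try rfl)
      all_goals ring
    have h2 : HasDerivAt (fun x => 4*lam*(v x)*(deriv v x))
        (4*lam*(deriv v x * deriv v x + v x * deriv (deriv v) x)) x := by
      have := ((hV x).mul (hV1 x)).const_mul (4*lam)
      convert this using 1
      all_goals (try funext y)
      all_goals (try simp only [id_eq, Pi.mul_apply, Pi.pow_apply])
      all_goals (try push_cast)
      all_goals (try rfl)
      all_goals ring
    have h3 : HasDerivAt (fun x => 8*lam*x*(v x)*(deriv (deriv v) x))
        (8*lam*((v x + x*deriv v x)*deriv (deriv v) x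
          + x*(v x)*deriv (deriv (deriv v)) x)) x := by
      have := (((hasDerivAt_id x).mul (hV x)).mul (hV2 x)).const_mul (8*lam)
      convert this using 1
      all_goals (try funext y)
      all_goals (try simp only [id_eq, Pi.mul_apply, Pi.pow_apply])
      all_goals (try push_cast)
      all_goals (try rfl)
      all_goals ring
    have h4 : HasDerivAt (fun x => 4*lam*x*(deriv v x)^2)
        (4*lam*((deriv v x)^2 + x*(2*(deriv v x)*deriv (deriv v) x))) x := by
      have := ((hasDerivAt_id x).mul ((hV1 x).pow 2)).const_mul (4*lam)
      convert this using 1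
      all_goals (try funext y)
      all_goals (try simp only [id_eq, Pi.mul_apply, Pi.pow_apply])
      all_goals (try push_cast)
      all_goals (try rfl)
      all_goals ring
    have := ((h1.sub h2).sub h3).add h4
    convert this using 1
    all_goals (try funext y)
    all_goals (try simp only [hGdef, id_eq, Pi.mul_apply, Pi.pow_apply])
    all_goals (try push_cast)
    all_goals (try rfl)
    all_goals ring
  have hGcont : Continuous G := by
    simp only [hGdef]
    fun_prop
  -- ∫ G = F b − F a = 0
  have hint : ∫ x in a..b, G x = F b - F a :=
    intervalIntegral.integral_eq_sub_of_hasDerivAt (fun x _ => hF x)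
      (hGcont.intervalIntegrable a b)
  have hF0 : F b - F a = 0 := by
    simp [hFdef, ha, hb, ha', hb']
  -- rewrite the φ-derivatives in the goal
  rw [deriv_phiW, deriv2_phiW]
  have hiter2 : deriv^[2] v = deriv (deriv v) := rfl
  have hiter3 : deriv^[3] v = deriv (deriv (deriv v)) := rfl
  rw [hiter2, hiter3]
  constructor
  · -- first identity
    have hL : Continuous (fun x => v x *
        (-4 * (2*lam*x)^3 * deriv v x - 6 * (2*lam) * deriv (deriv v) x
          - 4 * (2*lam*x) * deriv (deriv (deriv v)) x)) := by
      fun_prop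
    have hR : Continuous (fun x : ℝ => 6*(2*lam*x)^2*(2*lam)*(v x)^2) := by
      fun_prop
    have hsub : (∫ x in a..b, v x *
        (-4 * (2*lam*x)^3 * deriv v x - 6 * (2*lam) * deriv (deriv v) x
          - 4 * (2*lam*x) * deriv (deriv (deriv v)) x))
        - (∫ x in a..b, 6*(2*lam*x)^2*(2*lam)*(v x)^2) = ∫ x in a..b, G x := by
      rw [← intervalIntegral.integral_sub (hL.intervalIntegrable a b)
        (hR.intervalIntegrable a b)]
      apply intervalIntegral.integral_congr
      intro x _
      simp only [hGdef]
      ring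
    have := hsub.trans (hint.trans hF0)
    linarith
  · -- second identity
    rw [← intervalIntegral.integral_const_mul]
    apply intervalIntegral.integral_congr
    intro x _
    ring
end
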